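/- arXiv:2106.08374 — 2 statements merged into one kernel-verified Lean document; each statement's English description precedes it below -/
import Mathlib

section
/- Let y > 0, α ∈ (0, 1/2), and let a : [0, y] → ℝ be continuous with a(r) ≤ -δ for all r ∈ [0, y] for some δ > 0. Define γ(y, u) = ∫_u^y a(r) dr. Then lim_{ε → 0⁺} ∫₀^{y/ε} e^{γ(y, y - ε t)/ε} t^{2α - 1} dt = Γ(2α)/|a(y)|^{2α}, where Γ is the Gamma function. -/
open Filter Real intervalIntegral MeasureTheory Set Topology

/-- Singular limit with non-autonomous linearization: for `y > 0`,
`α ∈ (0,1/2)`, a continuous coefficient `a : [0,y] → ℝ` bounded above by `-δ`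
for some `δ > 0`, and `γ(y,u) = ∫_u^y a(r) dr`, one has
`∫₀^{y/ε} e^{γ(y, y-εt)/ε} t^{2α-1} dt → Γ(2α)/|a(y)|^{2α}` as `ε → 0⁺`. -/
theorem nonautonomous_memory_integral_limit (y α δ : ℝ) (a : ℝ → ℝ)
    (hy : 0 < y) (hα : α ∈ Set.Ioo 0 (1 / 2 : ℝ)) (hδ : 0 < δ)
    (ha_cont : ContinuousOn a (Set.Icc 0 y))
    (ha_neg : ∀ r ∈ Set.Icc (0 : ℝ) y, a r ≤ -δ) :
    Tendsto
      (fun ε : ℝ =>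
        ∫ t in (0 : ℝ)..(y / ε),
          Real.exp ((∫ r in (y - ε * t)..y, a r) / ε) * t ^ (2 * α - 1))
      (nhdsWithin 0 (Set.Ioi 0))
      (nhds (Real.Gamma (2 * α) / |a y| ^ (2 * α))) := by
  obtain ⟨hα0, hα2⟩ := hα
  set s : ℝ := 2 * α - 1 with hsdef
  have hs1 : (-1 : ℝ) < s := by simp only [hsdef]; linarith
  have h2α : (0 : ℝ) < 2 * α := by linarith
  -- continuous extension of `a`
  set pr : ℝ → ℝ := fun r => max 0 (min r y) with hprdef
  have hprcont : Continuous pr := continuous_const.max (continuous_id.min continuous_const)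
  have hprmem : ∀ r, pr r ∈ Set.Icc 0 y := fun r =>
    ⟨le_max_left _ _, max_le hy.le (min_le_right _ _)⟩
  have hpreq : ∀ r ∈ Set.Icc 0 y, pr r = r := fun r hr => by
    simp only [hprdef, min_eq_left hr.2, max_eq_right hr.1]
  set b : ℝ → ℝ := fun r => a (pr r) with hbdef
  have hbcont : Continuous b := ha_cont.comp_continuous hprcont hprmem
  have hbeq : ∀ r ∈ Set.Icc 0 y, b r = a r := fun r hr => by
    simp only [hbdef, hpreq r hr]
  have hbneg : ∀ r, b r ≤ -δ := fun r => ha_neg _ (hprmem r)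
  have hby : b y = a y := hbeq y ⟨hy.le, le_rfl⟩
  have hayneg : a y < 0 := lt_of_le_of_lt (ha_neg y ⟨hy.le, le_rfl⟩) (by linarith)
  have habs : |a y| = -(a y) := abs_of_neg hayneg
  have hcpos : (0 : ℝ) < -(a y) := by linarith
  -- primitive
  set H : ℝ → ℝ := fun u => ∫ r in u..y, b r with hHdef
  have hHy : H y = 0 := intervalIntegral.integral_same
  have hHd : ∀ u, HasDerivAt H (-(b u)) u := fun u =>
    intervalIntegral.integral_hasDerivAt_left (hbcont.intervalIntegrable _ _)
      (hbcont.stronglyMeasurableAtFilter _ _) hbcont.continuousAt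
  -- indicator family and limit function
  set F : ℝ → ℝ → ℝ := fun ε =>
    Set.indicator (Set.Ioc 0 (y / ε)) (fun t => Real.exp (H (y - ε * t) / ε) * t ^ s) with hFdef
  set f : ℝ → ℝ := fun t => Real.exp (a y * t) * t ^ s with hfdef
  set bd : ℝ → ℝ := fun t => t ^ s * Real.exp (-δ * t) with hbddef
  have hHc : Continuous H := continuous_iff_continuousAt.2 fun u => (hHd u).continuousAt
  clear_value pr b H F f bd
  -- measurability
  have hmeasg : ∀ ε : ℝ, AEStronglyMeasurable (F ε) (volume.restrict (Set.Ioi 0)) := by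
    intro ε
    have hg : ContinuousOn (fun t : ℝ => Real.exp (H (y - ε * t) / ε) * t ^ s)
        (Set.Ioc 0 (y / ε)) := by
      intro t ht
      exact ((Real.continuous_exp.comp
        ((hHc.comp (by continuity)).div_const ε)).continuousAt).continuousWithinAt.mul
        ((Real.continuousAt_rpow_const t s (Or.inl ht.1.ne')).continuousWithinAt)
    rw [hFdef, aestronglyMeasurable_indicator_iff measurableSet_Ioc,
      Measure.restrict_restrict measurableSet_Ioc,
      Set.inter_eq_left.2 Set.Ioc_subset_Ioi_self]
    exact hg.aestronglyMeasurable measurableSet_Ioc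
  -- bound integrable
  have hint : IntegrableOn bd (Set.Ioi 0) := by
    have h := integrableOn_rpow_mul_exp_neg_mul_rpow (p := 1) hs1 one_pos hδ
    simp_rw [Real.rpow_one] at h
    rw [hbddef]
    exact h
  -- bound
  have hbound : ∀ᶠ ε in (𝓝[>] (0:ℝ)), ∀ᵐ t ∂(volume.restrict (Set.Ioi (0:ℝ))), ‖F ε t‖ ≤ bd t := by
    filter_upwards [self_mem_nhdsWithin] with ε (hε : (0:ℝ) < ε)
    filter_upwards [self_mem_ae_restrict measurableSet_Ioi] with t (ht : (0:ℝ) < t)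
    by_cases hmem : t ∈ Set.Ioc 0 (y / ε)
    · simp only [hFdef]
      rw [Set.indicator_of_mem hmem]
      have hεt : ε * t ≤ y := by
        have := hmem.2
        calc ε * t = t * ε := mul_comm _ _
        _ ≤ (y / ε) * ε := by nlinarith [hmem.2]
        _ = y := div_mul_cancel₀ _ hε.ne'
      have hle : H (y - ε * t) ≤ -δ * (ε * t) := by
        have h1 : y - ε * t ≤ y := sub_le_self y (mul_nonneg hε.le ht.le)
        calc H (y - ε * t) = ∫ r in (y - ε * t)..y, b r := by rw [hHdef]
        _ ≤ ∫ _ in (y - ε * t)..y, (-δ : ℝ) :=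
              intervalIntegral.integral_mono_on h1 (hbcont.intervalIntegrable _ _)
                intervalIntegrable_const (fun r _ => hbneg r)
        _ = -δ * (ε * t) := by rw [intervalIntegral.integral_const, smul_eq_mul]; ring
      have hdiv : H (y - ε * t) / ε ≤ -δ * t := by
        rw [div_le_iff₀ hε]
        calc H (y - ε * t) ≤ -δ * (ε * t) := hle
        _ = -δ * t * ε := by ring
      have h1 : Real.exp (H (y - ε * t) / ε) ≤ Real.exp (-δ * t) := Real.exp_le_exp.2 hdiv
      have h2 : (0:ℝ) ≤ t ^ s := Real.rpow_nonneg ht.le _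
      rw [Real.norm_of_nonneg (mul_nonneg (Real.exp_pos _).le h2), hbddef]
      calc Real.exp (H (y - ε * t) / ε) * t ^ s ≤ Real.exp (-δ * t) * t ^ s :=
            mul_le_mul_of_nonneg_right h1 h2
      _ = t ^ s * Real.exp (-δ * t) := mul_comm _ _
    · simp only [hFdef]
      rw [Set.indicator_of_notMem hmem, norm_zero, hbddef]
      positivity
  -- pointwise limit
  have hlim : ∀ᵐ t ∂(volume.restrict (Set.Ioi (0:ℝ))),
      Tendsto (fun ε => F ε t) (𝓝[>] (0:ℝ)) (𝓝 (f t)) := by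
    filter_upwards [self_mem_ae_restrict measurableSet_Ioi] with t (ht : (0:ℝ) < t)
    have hψ : HasDerivAt (fun ε : ℝ => H (y - ε * t)) (b y * t) 0 := by
      have h1 : HasDerivAt (fun ε : ℝ => y - ε * t) (-t) 0 := (hasDerivAt_mul_const t).const_sub y
      have h2 : HasDerivAt H (-(b y)) (y - 0 * t) := by simpa using hHd y
      have := h2.comp 0 h1
      simpa [mul_comm, Function.comp_def] using this
    have hslope : Tendsto (fun ε : ℝ => ε⁻¹ * H (y - ε * t)) (𝓝[≠] (0:ℝ)) (𝓝 (b y * t)) := by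
      have := hasDerivAt_iff_tendsto_slope_zero.1 hψ
      simpa [hHy, smul_eq_mul] using this
    have hslope' : Tendsto (fun ε : ℝ => H (y - ε * t) / ε) (𝓝[>] (0:ℝ)) (𝓝 (a y * t)) := by
      rw [← hby]
      refine Tendsto.congr (fun ε => (div_eq_inv_mul _ _).symm) ?_
      exact hslope.mono_left (nhdsWithin_mono _ fun x hx => ne_of_gt hx)
    have hexp : Tendsto (fun ε : ℝ => Real.exp (H (y - ε * t) / ε) * t ^ s) (𝓝[>] (0:ℝ))
        (𝓝 (f t)) := by
      have h := (Real.continuous_exp.tendsto (a y * t)).comp hslope'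
      simp only [Function.comp_def] at h
      rw [hfdef]
      exact h.mul_const _
    refine hexp.congr' ?_
    filter_upwards [Ioo_mem_nhdsGT (by positivity : (0:ℝ) < y / t)] with ε hε
    have hmem : t ∈ Set.Ioc 0 (y / ε) := by
      refine ⟨ht, ?_⟩
      rw [le_div_iff₀ hε.1]
      have : ε < y / t := hε.2
      nlinarith [(lt_div_iff₀ ht).1 this]
    simp only [hFdef]
    exact (Set.indicator_of_mem hmem (fun t => Real.exp (H (y - ε * t) / ε) * t ^ s)).symm
  -- dominated convergence
  have key : Tendsto (fun ε => ∫ t in Set.Ioi (0:ℝ), F ε t) (𝓝[>] (0:ℝ))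
      (𝓝 (∫ t in Set.Ioi (0:ℝ), f t)) :=
    MeasureTheory.tendsto_integral_filter_of_dominated_convergence bd
      (Filter.Eventually.of_forall hmeasg) hbound hint hlim
  -- value of the limit integral
  have hval : ∫ t in Set.Ioi (0:ℝ), f t = Real.Gamma (2 * α) / |a y| ^ (2 * α) := by
    have h1 : ∫ t in Set.Ioi (0:ℝ), f t
        = ∫ t in Set.Ioi (0:ℝ), t ^ (2 * α - 1) * Real.exp (-(-(a y) * t)) := by
      refine setIntegral_congr_fun measurableSet_Ioi fun t _ => ?_
      simp only [hfdef, hsdef]; ring_nf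
    rw [h1, integral_rpow_mul_exp_neg_mul_Ioi h2α hcpos, habs, one_div,
      Real.inv_rpow hcpos.le, inv_mul_eq_div]
  rw [← hval]
  refine key.congr' ?_
  filter_upwards [self_mem_nhdsWithin] with ε (hε : (0:ℝ) < ε)
  -- rewrite the interval integral as the indicator integral
  have hya : ∀ t ∈ Set.uIcc (0:ℝ) (y / ε),
      (∫ r in (y - ε * t)..y, a r) = H (y - ε * t) := by
    intro t htm
    rw [Set.uIcc_of_le (by positivity)] at htm
    have h0 : 0 ≤ y - ε * t := by
      have : ε * t ≤ y := by
        have := htm.2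
        calc ε * t = t * ε := mul_comm _ _
        _ ≤ (y / ε) * ε := by nlinarith
        _ = y := div_mul_cancel₀ _ hε.ne'
      linarith
    have h1 : y - ε * t ≤ y := by nlinarith [htm.1]
    rw [hHdef]
    show (∫ r in (y - ε * t)..y, a r) = ∫ r in (y - ε * t)..y, b r
    refine (intervalIntegral.integral_congr fun r hr => ?_).symm
    rw [Set.uIcc_of_le h1] at hr
    exact hbeq r ⟨le_trans h0 hr.1, hr.2⟩
  calc (∫ t in Set.Ioi (0:ℝ), F ε t)
      = ∫ t in Set.Ioc (0:ℝ) (y / ε), Real.exp (H (y - ε * t) / ε) * t ^ s := by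
        rw [hFdef, setIntegral_indicator measurableSet_Ioc,
          Set.inter_eq_right.2 Set.Ioc_subset_Ioi_self]
    _ = ∫ t in (0:ℝ)..(y / ε), Real.exp (H (y - ε * t) / ε) * t ^ s :=
        (intervalIntegral.integral_of_le (by positivity)).symm
    _ = ∫ t in (0:ℝ)..(y / ε), Real.exp ((∫ r in (y - ε * t)..y, a r) / ε) * t ^ (2 * α - 1) := by
        refine intervalIntegral.integral_congr fun t htm => ?_
        rw [hya t htm, hsdef]
end

section
/- Let T > 0, ε > 0, C > 0, α ∈ (0, 1/2), and let a : [0, T] → ℝ be continuous. Define γ(s, u) = ∫_u^s a(r) dr and V(s) = C ∫₀^s ∫₀^s e^{(γ(s,u) + γ(s,v))/ε} |u - v|^{2α - 1} du dv for s ∈ [0, T]. Then V is differentiable on (0, T) and satisfies the nonlocal Lyapunov-type equation ε V'(s) = 2 a(s) V(s) + 2 ε C ∫₀^s e^{γ(s,u)/ε} (s - u)^{2α - 1} du. -/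
open intervalIntegral

open MeasureTheory Set Filter in
/-- Integrability of `|c - x| ^ β` for `β > -1`. -/
lemma abs_rpow_intervalIntegrable {β : ℝ} (hβ : -1 < β) (c p q : ℝ) :
    IntervalIntegrable (fun x => |c - x| ^ β) volume p q := by
  have h0 : ∀ d : ℝ, 0 ≤ d → IntervalIntegrable (fun x : ℝ => |x| ^ β) volume 0 d := by
    intro d hd
    have h := intervalIntegrable_rpow' (a := 0) (b := d) hβ
    rw [intervalIntegrable_iff] at h ⊢
    refine h.congr_fun ?_ measurableSet_uIoc
    intro x hx
    rw [Set.uIoc_of_le hd] at hx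
    show x ^ β = |x| ^ β
    rw [abs_of_pos hx.1]
  have base : ∀ d : ℝ, IntervalIntegrable (fun x : ℝ => |x| ^ β) volume 0 d := by
    intro d
    rcases le_total 0 d with hd | hd
    · exact h0 d hd
    · rw [IntervalIntegrable.iff_comp_neg]
      simpa [abs_neg] using h0 (-d) (by linarith)
  have trans : ∀ p' q' : ℝ, IntervalIntegrable (fun x : ℝ => |x| ^ β) volume p' q' :=
    fun p' q' => (base p').symm.trans (base q')
  have := (trans (c - p) (c - q)).comp_sub_left c
  simpa using this

set_option maxHeartbeats 2000000 in
open MeasureTheory Set Filter in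
/-- Nonlocal Lyapunov-type equation: with `γ(s,u) = ∫_u^s a(r) dr` and
`V(s) = C ∫₀^s ∫₀^s e^{(γ(s,u)+γ(s,v))/ε} |u-v|^{2α-1} du dv`, the function `V`
is differentiable on `(0,T)` and satisfies
`ε V'(s) = 2 a(s) V(s) + 2 ε C ∫₀^s e^{γ(s,u)/ε} (s-u)^{2α-1} du`. -/
theorem nonlocal_lyapunov_equation (T ε C α : ℝ) (a : ℝ → ℝ)
    (hT : 0 < T) (hε : 0 < ε) (hC : 0 < C) (hα : α ∈ Set.Ioo 0 (1 / 2 : ℝ))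
    (ha : ContinuousOn a (Set.Icc 0 T)) :
    let γ : ℝ → ℝ → ℝ := fun s u => ∫ r in u..s, a r
    let V : ℝ → ℝ := fun s =>
      C * ∫ u in (0 : ℝ)..s, ∫ v in (0 : ℝ)..s,
        Real.exp ((γ s u + γ s v) / ε) * |u - v| ^ (2 * α - 1)
    ∀ s ∈ Set.Ioo (0 : ℝ) T,
      HasDerivAt V
        ((2 * a s * V s +
            2 * ε * C * ∫ u in (0 : ℝ)..s,
              Real.exp (γ s u / ε) * (s - u) ^ (2 * α - 1)) / ε) s := by
  intro γ V s hs
  obtain ⟨hs0, hsT⟩ := hs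
  set β : ℝ := 2 * α - 1 with hβdef
  have hβ : -1 < β := by have := hα.1; simp only [hβdef]; linarith
  -- clamped coefficient, globally continuous
  set abar : ℝ → ℝ := fun r => a (max 0 (min r T)) with habar_def
  have hmem : ∀ r : ℝ, max 0 (min r T) ∈ Icc (0:ℝ) T := fun r =>
    ⟨le_max_left _ _, max_le hT.le (min_le_right _ _)⟩
  have habar : Continuous abar :=
    ha.comp_continuous (continuous_const.max (continuous_id.min continuous_const)) hmem
  have habar_eq : ∀ r ∈ Icc (0:ℝ) T, abar r = a r := by
    intro r hr
    simp only [habar_def, min_eq_left hr.2, max_eq_right hr.1]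
  -- primitive of abar
  set A : ℝ → ℝ := fun t => ∫ r in (0:ℝ)..t, abar r with hA_def
  have hA : ∀ t : ℝ, HasDerivAt A (abar t) t := fun t =>
    integral_hasDerivAt_right (habar.intervalIntegrable _ _)
      (habar.stronglyMeasurableAtFilter _ _) habar.continuousAt
  have hAc : Continuous A := by
    rw [continuous_iff_continuousAt]; exact fun t => (hA t).continuousAt
  set f : ℝ → ℝ := fun u => Real.exp (-A u / ε) with hf_def
  have hf : Continuous f := ((hAc.neg).div_const ε).rexp
  have hfm : Measurable f := hf.measurable
  have hfpos : ∀ u, 0 < f u := fun u => Real.exp_pos _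
  obtain ⟨M, hM⟩ := (isCompact_Icc : IsCompact (Icc (0:ℝ) T)).exists_bound_of_continuousOn
    hf.continuousOn
  have hM' : ∀ x ∈ Icc (0:ℝ) T, f x ≤ M := fun x hx =>
    (le_abs_self _).trans (by simpa [Real.norm_eq_abs] using hM x hx)
  have hM0 : 0 ≤ M := le_trans (norm_nonneg _) (hM 0 ⟨le_refl _, hT.le⟩)
  have hrpow : Measurable fun t : ℝ => t ^ β := by measurability
  set g : ℝ → ℝ := fun u => ∫ t in (0:ℝ)..u, f (u - t) * t ^ β with hg_def
  -- continuity of g on [0, T]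
  have hg_cont : ContinuousOn g (Icc 0 T) := by
    intro u₀ hu₀
    set F : ℝ → ℝ → ℝ := fun u t => (Iic u).indicator (fun t => f (u - t) * t ^ β) t with hF_def
    have hFm : ∀ u : ℝ, Measurable (F u) := fun u =>
      ((hfm.comp (measurable_const.sub measurable_id)).mul hrpow).indicator measurableSet_Iic
    have hrepr : ∀ u ∈ Icc (0:ℝ) T, (∫ t in (0:ℝ)..T, F u t) = g u := by
      intro u hu
      rw [integral_of_le hT.le]
      simp only [hF_def]
      rw [MeasureTheory.integral_indicator measurableSet_Iic,
        Measure.restrict_restrict measurableSet_Iic, Set.Iic_inter_Ioc_of_le hu.2,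
        ← integral_of_le hu.1]
    have key : ContinuousWithinAt (fun u => ∫ t in (0:ℝ)..T, F u t) (Icc 0 T) u₀ := by
      apply continuousWithinAt_of_dominated_interval (bound := fun t => M * t ^ β)
      · filter_upwards with u
        exact (hFm u).aestronglyMeasurable
      · filter_upwards [self_mem_nhdsWithin] with u hu
        refine Eventually.of_forall fun t ht => ?_
        rw [Set.uIoc_of_le hT.le] at ht
        by_cases htu : t ≤ u
        · have h1 : F u t = f (u - t) * t ^ β := Set.indicator_of_mem (show t ∈ Iic u from htu) _
          rw [h1, Real.norm_eq_abs, abs_of_nonneg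
            (mul_nonneg (hfpos _).le (Real.rpow_nonneg ht.1.le _))]
          exact mul_le_mul_of_nonneg_right
            (hM' (u - t) ⟨by linarith [ht.1], by linarith [hu.2, ht.1]⟩)
            (Real.rpow_nonneg ht.1.le _)
        · have h1 : F u t = 0 := Set.indicator_of_notMem (show t ∉ Iic u from htu) _
          rw [h1, norm_zero]
          exact mul_nonneg hM0 (Real.rpow_nonneg ht.1.le _)
      · exact (intervalIntegrable_rpow' hβ).const_mul M
      · have hne : ∀ᵐ t : ℝ, t ≠ u₀ := by
          refine MeasureTheory.ae_iff.2 ?_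
          have he : {t : ℝ | ¬ t ≠ u₀} = {u₀} := by ext t; simp
          rw [he]; exact Real.volume_singleton
        filter_upwards [hne] with t ht _
        rcases lt_or_gt_of_ne ht with h | h
        · apply ContinuousAt.continuousWithinAt
          have hev : (fun u => F u t) =ᶠ[nhds u₀] fun u => f (u - t) * t ^ β := by
            filter_upwards [Ioi_mem_nhds h] with u hu
            exact Set.indicator_of_mem (Set.mem_Iic.2 (le_of_lt hu)) _
          exact (((hf.comp (continuous_id.sub continuous_const)).mul
            continuous_const).continuousAt).congr hev.symm
        · apply ContinuousAt.continuousWithinAt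
          have hev : (fun u => F u t) =ᶠ[nhds u₀] fun _ => (0:ℝ) := by
            filter_upwards [Iio_mem_nhds h] with u hu
            exact Set.indicator_of_notMem (show t ∉ Iic u by simp only [Set.mem_Iic, not_le]; exact hu) _
          exact continuousAt_const.congr hev.symm
    refine key.congr (fun u hu => (hrepr u hu).symm) (hrepr u₀ hu₀).symm
  set w : ℝ → ℝ := fun u => f u * g u with hw_def
  have hw_cont : ContinuousOn w (Icc 0 T) := hf.continuousOn.mul hg_cont
  -- triangle inner integral representation
  have hgrep : ∀ u : ℝ, (∫ v in (0:ℝ)..u, f v * (u - v) ^ β) = g u := by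
    intro u
    have h1 : EqOn (fun v => f v * (u - v) ^ β)
        (fun v => (fun x => f (u - x) * x ^ β) (u - v)) (uIcc 0 u) := by
      intro v _; simp
    rw [intervalIntegral.integral_congr h1,
      integral_comp_sub_left (fun x => f (u - x) * x ^ β) u]
    simp [hg_def]
  -- symmetric kernel
  set K : ℝ × ℝ → ℝ := fun p => f p.1 * f p.2 * |p.1 - p.2| ^ β with hK_def
  have hKm : Measurable K :=
    ((hfm.comp measurable_fst).mul (hfm.comp measurable_snd)).mul
      (hrpow.comp (measurable_fst.sub measurable_snd).abs)
  have hKnn : ∀ p, 0 ≤ K p := fun p =>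
    mul_nonneg (mul_nonneg (hfpos _).le (hfpos _).le) (Real.rpow_nonneg (abs_nonneg _) _)
  have hKsymm : ∀ u v : ℝ, K (v, u) = K (u, v) := by
    intro u v; simp only [hK_def]; rw [abs_sub_comm]; ring
  -- γ in terms of A
  have hγA : ∀ c ∈ Icc (0:ℝ) T, ∀ x ∈ Icc (0:ℝ) T, γ c x = A c - A x := by
    intro c hc x hx
    have hsub : uIcc x c ⊆ Icc (0:ℝ) T := by
      have hx' : x ∈ uIcc (0:ℝ) T := by rw [Set.uIcc_of_le hT.le]; exact hx
      have hc' : c ∈ uIcc (0:ℝ) T := by rw [Set.uIcc_of_le hT.le]; exact hc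
      rw [← Set.uIcc_of_le hT.le]; exact Set.uIcc_subset_uIcc hx' hc'
    have h1 : (∫ r in x..c, a r) = ∫ r in x..c, abar r :=
      intervalIntegral.integral_congr fun r hr => (habar_eq r (hsub hr)).symm
    have h2 := integral_interval_sub_left (habar.intervalIntegrable (μ := volume) 0 c)
      (habar.intervalIntegrable (μ := volume) 0 x)
    show (∫ r in x..c, a r) = A c - A x
    rw [h1, hA_def, ← h2]
  -- main identity for V
  have hVeq : ∀ c ∈ Icc (0:ℝ) T,
      V c = C * (Real.exp (2 * A c / ε) * (2 * ∫ u in (0:ℝ)..c, w u)) := by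
    intro c hc
    -- section integrability
    have hsec : ∀ u : ℝ, Integrable (fun v => K (u, v)) (volume.restrict (Ioc 0 c)) := by
      intro u
      have h0 : Integrable (fun v => f u * |u - v| ^ β) (volume.restrict (Ioc 0 c)) :=
        ((abs_rpow_intervalIntegrable hβ u 0 c).1).const_mul (f u)
      have h1 : Integrable (fun v => f v * (f u * |u - v| ^ β))
          (volume.restrict (Ioc 0 c)) := by
        apply h0.bdd_mul hf.aestronglyMeasurable
        filter_upwards [ae_restrict_mem measurableSet_Ioc] with v hv
        rw [Real.norm_eq_abs, abs_of_pos (hfpos v)]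
        exact hM' v ⟨hv.1.le, hv.2.trans hc.2⟩
      exact h1.congr (Eventually.of_forall fun v => by simp only [hK_def]; ring)
    -- uniform bound for the inner integral
    set Babs : ℝ := ∫ t in (-c : ℝ)..c, |t| ^ β with hBabs_def
    have hBabs : ∀ u ∈ Ioc (0:ℝ) c, (∫ v in Ioc (0:ℝ) c, |u - v| ^ β) ≤ Babs := by
      intro u hu
      have hfi : IntegrableOn (fun v => |u - v| ^ β) (Ioc (u - c) (u + c)) volume :=
        (abs_rpow_intervalIntegrable hβ u (u - c) (u + c)).1
      have hsub : Ioc (0:ℝ) c ⊆ Ioc (u - c) (u + c) := fun v hv =>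
        ⟨by linarith [hv.1, hu.2], by linarith [hv.2, hu.1]⟩
      have h1 : (∫ v in Ioc (0:ℝ) c, |u - v| ^ β) ≤ ∫ v in Ioc (u - c) (u + c), |u - v| ^ β :=
        setIntegral_mono_set hfi
          (Eventually.of_forall fun v => Real.rpow_nonneg (abs_nonneg _) _)
          (HasSubset.Subset.eventuallyLE hsub)
      have h2 : (∫ v in Ioc (u - c) (u + c), |u - v| ^ β) = Babs := by
        rw [← integral_of_le (by linarith [hu.1.le, hu.2, hT.le] : u - c ≤ u + c)]
        have h3 := integral_comp_sub_left (a := u - c) (b := u + c) (fun x => |x| ^ β) u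
        rw [show u - (u + c) = -c by ring, show u - (u - c) = c by ring] at h3
        exact h3
      exact h1.trans h2.le
    -- product integrability
    have hpb : ∀ u ∈ Ioc (0:ℝ) c,
        (∫ v in Ioc (0:ℝ) c, ‖K (u, v)‖) ≤ M * M * Babs := by
      intro u hu
      have e1 : (∫ v in Ioc (0:ℝ) c, ‖K (u, v)‖) = ∫ v in Ioc (0:ℝ) c, K (u, v) :=
        integral_congr_ae (Eventually.of_forall fun v => Real.norm_of_nonneg (hKnn _))
      rw [e1]
      have hle : (∫ v in Ioc (0:ℝ) c, K (u, v)) ≤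
          ∫ v in Ioc (0:ℝ) c, M * M * |u - v| ^ β := by
        apply setIntegral_mono_on (hsec u)
          (((abs_rpow_intervalIntegrable hβ u 0 c).1).const_mul (M * M)) measurableSet_Ioc
        intro v hv
        simp only [hK_def]
        have h3 : (0:ℝ) ≤ |u - v| ^ β := Real.rpow_nonneg (abs_nonneg _) _
        exact mul_le_mul
          (mul_le_mul (hM' u ⟨hu.1.le, hu.2.trans hc.2⟩)
            (hM' v ⟨hv.1.le, hv.2.trans hc.2⟩) (hfpos v).le hM0) le_rfl h3
          (mul_nonneg hM0 hM0)
      rw [MeasureTheory.integral_const_mul] at hle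
      exact hle.trans (mul_le_mul_of_nonneg_left (hBabs u hu) (mul_nonneg hM0 hM0))
    have hKprod : Integrable K
        ((volume.restrict (Ioc (0:ℝ) c)).prod (volume.restrict (Ioc (0:ℝ) c))) := by
      refine (integrable_prod_iff hKm.aestronglyMeasurable).2
        ⟨Eventually.of_forall hsec, ?_⟩
      refine Integrable.mono' (g := fun _ => M * M * Babs)
        (integrableOn_const measure_Ioc_lt_top.ne)
        (hKm.norm.aestronglyMeasurable.integral_prod_right') ?_
      filter_upwards [ae_restrict_mem measurableSet_Ioc] with u hu
      rw [Real.norm_of_nonneg (integral_nonneg fun v => norm_nonneg _)]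
      exact hpb u hu
    -- triangle decomposition
    set Tri : Set (ℝ × ℝ) := {p | p.2 ≤ p.1} with hTri_def
    have hTri : MeasurableSet Tri := measurableSet_le measurable_snd measurable_fst
    set K₁ : ℝ × ℝ → ℝ := Tri.indicator K with hK₁_def
    set K₂ : ℝ × ℝ → ℝ := Triᶜ.indicator K with hK₂_def
    have hK₁i : Integrable K₁
        ((volume.restrict (Ioc (0:ℝ) c)).prod (volume.restrict (Ioc (0:ℝ) c))) :=
      hKprod.indicator hTri
    have hK₂i : Integrable K₂
        ((volume.restrict (Ioc (0:ℝ) c)).prod (volume.restrict (Ioc (0:ℝ) c))) :=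
      hKprod.indicator hTri.compl
    have haddK : ∀ p, K₁ p + K₂ p = K p := by
      intro p
      by_cases hp : p ∈ Tri <;> simp [hK₁_def, hK₂_def, hp]
    have hsplit : (∫ u in Ioc (0:ℝ) c, ∫ v in Ioc (0:ℝ) c, K (u, v)) =
        (∫ u in Ioc (0:ℝ) c, ∫ v in Ioc (0:ℝ) c, K₁ (u, v)) +
          ∫ u in Ioc (0:ℝ) c, ∫ v in Ioc (0:ℝ) c, K₂ (u, v) := by
      rw [← MeasureTheory.integral_add hK₁i.integral_prod_left hK₂i.integral_prod_left]
      refine integral_congr_ae ?_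
      filter_upwards [hK₁i.prod_right_ae, hK₂i.prod_right_ae] with u h1 h2
      rw [← MeasureTheory.integral_add h1 h2]
      exact integral_congr_ae (Eventually.of_forall fun v => (haddK (u, v)).symm)
    have hswap : (∫ u in Ioc (0:ℝ) c, ∫ v in Ioc (0:ℝ) c, K₂ (u, v)) =
        ∫ u in Ioc (0:ℝ) c, ∫ v in Ioc (0:ℝ) c, K₁ (u, v) := by
      have h1 : Integrable (Function.uncurry fun u v => K₂ (u, v))
          ((volume.restrict (Ioc (0:ℝ) c)).prod (volume.restrict (Ioc (0:ℝ) c))) := by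
        exact hK₂i
      rw [MeasureTheory.integral_integral_swap h1]
      refine integral_congr_ae (Eventually.of_forall fun x => ?_)
      refine integral_congr_ae ?_
      have hnex : ∀ᵐ y : ℝ, y ≠ x := by
        refine MeasureTheory.ae_iff.2 ?_
        have he : {y : ℝ | ¬ y ≠ x} = {x} := by ext y; simp
        rw [he]; exact Real.volume_singleton
      refine (ae_restrict_of_ae hnex).mono fun y hy => ?_
      rcases lt_or_gt_of_ne hy with h | h
      · have m1 : (y, x) ∈ Triᶜ := by
          simp only [hTri_def, Set.mem_compl_iff, Set.mem_setOf_eq, not_le]; exact h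
        have m2 : (x, y) ∈ Tri := by
          simp only [hTri_def, Set.mem_setOf_eq]; exact h.le
        calc K₂ (y, x) = K (y, x) := by rw [hK₂_def]; exact Set.indicator_of_mem m1 _
          _ = K (x, y) := hKsymm x y
          _ = K₁ (x, y) := by rw [hK₁_def]; exact (Set.indicator_of_mem m2 _).symm
      · have m1 : (y, x) ∉ Triᶜ := by
          simp only [hTri_def, Set.mem_compl_iff, Set.mem_setOf_eq, not_not]; exact h.le
        have m2 : (x, y) ∉ Tri := by
          simp only [hTri_def, Set.mem_setOf_eq, not_le]; exact h
        calc K₂ (y, x) = 0 := by rw [hK₂_def]; exact Set.indicator_of_notMem m1 _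
          _ = K₁ (x, y) := by rw [hK₁_def]; exact (Set.indicator_of_notMem m2 _).symm
    have htri : ∀ u ∈ Ioc (0:ℝ) c, (∫ v in Ioc (0:ℝ) c, K₁ (u, v)) = w u := by
      intro u hu
      have h1 : (fun v => K₁ (u, v)) = (Iic u).indicator (fun v => K (u, v)) := by
        funext v
        by_cases hv : v ≤ u <;>
          simp [hK₁_def, hTri_def, Set.indicator_apply, hv]
      calc (∫ v in Ioc (0:ℝ) c, K₁ (u, v))
          = ∫ v in Ioc (0:ℝ) c, (Iic u).indicator (fun v => K (u, v)) v := by rw [h1]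
        _ = ∫ v in Iic u, K (u, v) ∂(volume.restrict (Ioc (0:ℝ) c)) :=
            MeasureTheory.integral_indicator measurableSet_Iic
        _ = ∫ v in Ioc (0:ℝ) u, K (u, v) := by
            rw [Measure.restrict_restrict measurableSet_Iic, Set.Iic_inter_Ioc_of_le hu.2]
        _ = ∫ v in (0:ℝ)..u, K (u, v) := (integral_of_le hu.1.le).symm
        _ = ∫ v in (0:ℝ)..u, f u * (f v * |u - v| ^ β) := by
            apply intervalIntegral.integral_congr
            intro v _
            simp only [hK_def]; ring
        _ = f u * ∫ v in (0:ℝ)..u, f v * |u - v| ^ β :=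
            intervalIntegral.integral_const_mul _ _
        _ = f u * ∫ v in (0:ℝ)..u, f v * (u - v) ^ β := by
            congr 1
            apply intervalIntegral.integral_congr
            intro v hv
            rw [Set.uIcc_of_le hu.1.le] at hv
            show f v * |u - v| ^ β = f v * (u - v) ^ β
            rw [abs_of_nonneg (by linarith [hv.2] : (0:ℝ) ≤ u - v)]
        _ = f u * g u := by rw [hgrep u]
        _ = w u := rfl
    have hD : (∫ u in Ioc (0:ℝ) c, ∫ v in Ioc (0:ℝ) c, K (u, v)) =
        2 * ∫ u in (0:ℝ)..c, w u := by
      have h2 : (∫ u in Ioc (0:ℝ) c, ∫ v in Ioc (0:ℝ) c, K₁ (u, v)) =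
          ∫ u in (0:ℝ)..c, w u := by
        rw [integral_of_le hc.1]
        refine integral_congr_ae ?_
        filter_upwards [ae_restrict_mem measurableSet_Ioc] with u hu
        exact htri u hu
      rw [hsplit, hswap, h2]; ring
    -- now the V identity
    have hVdef : V c = C * ∫ u in (0:ℝ)..c, ∫ v in (0:ℝ)..c,
        Real.exp ((γ c u + γ c v) / ε) * |u - v| ^ β := rfl
    have hVc : V c = C * (Real.exp (2 * A c / ε) *
        ∫ u in Ioc (0:ℝ) c, ∫ v in Ioc (0:ℝ) c, K (u, v)) := by
      rw [hVdef]
      congr 1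
      rw [integral_of_le hc.1, ← MeasureTheory.integral_const_mul]
      refine integral_congr_ae ?_
      filter_upwards [ae_restrict_mem measurableSet_Ioc] with u hu
      have huT : u ∈ Icc (0:ℝ) T := ⟨hu.1.le, hu.2.trans hc.2⟩
      have hcongr : EqOn (fun v => Real.exp ((γ c u + γ c v) / ε) * |u - v| ^ β)
          (fun v => Real.exp (2 * A c / ε) * K (u, v)) (uIcc 0 c) := by
        intro v hv
        rw [Set.uIcc_of_le hc.1] at hv
        have hvT : v ∈ Icc (0:ℝ) T := ⟨hv.1, hv.2.trans hc.2⟩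
        simp only
        rw [hγA c hc u huT, hγA c hc v hvT]
        simp only [hK_def, hf_def]
        rw [show (A c - A u + (A c - A v)) / ε = 2 * A c / ε + (-A u / ε + -A v / ε) by ring,
          Real.exp_add, Real.exp_add]
        ring
      rw [← integral_of_le hc.1, ← intervalIntegral.integral_const_mul]
      exact intervalIntegral.integral_congr hcongr
    rw [hVc, hD]
  -- derivative of the nice representation
  set Φ : ℝ → ℝ := fun t => C * (Real.exp (2 * A t / ε) * (2 * ∫ u in (0:ℝ)..t, w u))
    with hΦ_def
  have hiI : IntervalIntegrable w volume 0 s := by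
    apply ContinuousOn.intervalIntegrable
    apply hw_cont.mono
    rw [Set.uIcc_of_le hs0.le]
    exact Icc_subset_Icc le_rfl hsT.le
  have hmeasw : StronglyMeasurableAtFilter w (nhds s) volume :=
    ContinuousOn.stronglyMeasurableAtFilter isOpen_Ioo (hw_cont.mono Ioo_subset_Icc_self)
      s ⟨hs0, hsT⟩
  have hcw : ContinuousAt w s := hw_cont.continuousAt (Icc_mem_nhds hs0 hsT)
  have hI : HasDerivAt (fun t => ∫ u in (0:ℝ)..t, w u) (w s) s :=
    integral_hasDerivAt_right hiI hmeasw hcw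
  have hE : HasDerivAt (fun t => Real.exp (2 * A t / ε))
      (Real.exp (2 * A s / ε) * (2 * abar s / ε)) s :=
    (((hA s).const_mul 2).div_const ε).exp
  have hΦd : HasDerivAt Φ (C * (Real.exp (2 * A s / ε) * (2 * abar s / ε) *
      (2 * ∫ u in (0:ℝ)..s, w u) + Real.exp (2 * A s / ε) * (2 * w s))) s := by
    have h2 : HasDerivAt (fun t => 2 * ∫ u in (0:ℝ)..t, w u) (2 * w s) s := hI.const_mul 2
    exact (hE.mul h2).const_mul C
  have hVΦ : V =ᶠ[nhds s] Φ := by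
    filter_upwards [isOpen_Ioo.mem_nhds (⟨hs0, hsT⟩ : s ∈ Ioo (0:ℝ) T)] with x hx
    exact hVeq x ⟨hx.1.le, hx.2.le⟩
  have hfinal := hΦd.congr_of_eventuallyEq hVΦ
  -- identify the derivative value
  have hVs : V s = C * (Real.exp (2 * A s / ε) * (2 * ∫ u in (0:ℝ)..s, w u)) :=
    hVeq s ⟨hs0.le, hsT.le⟩
  have has : a s = abar s := (habar_eq s ⟨hs0.le, hsT.le⟩).symm
  have hJ : (∫ u in (0:ℝ)..s, Real.exp (γ s u / ε) * (s - u) ^ β) =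
      Real.exp (A s / ε) * g s := by
    have hcongr : EqOn (fun u => Real.exp (γ s u / ε) * (s - u) ^ β)
        (fun u => Real.exp (A s / ε) * (f u * (s - u) ^ β)) (uIcc 0 s) := by
      intro u hu
      rw [Set.uIcc_of_le hs0.le] at hu
      simp only
      rw [hγA s ⟨hs0.le, hsT.le⟩ u ⟨hu.1, hu.2.trans hsT.le⟩]
      rw [show (A s - A u) / ε = A s / ε + -A u / ε by ring, Real.exp_add]
      simp only [hf_def]
      ring
    rw [intervalIntegral.integral_congr hcongr, intervalIntegral.integral_const_mul,
      hgrep s]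
  have hws : w s = Real.exp (-A s / ε) * g s := rfl
  have hexpc : Real.exp (2 * A s / ε) * Real.exp (-A s / ε) = Real.exp (A s / ε) := by
    rw [← Real.exp_add]; congr 1; ring
  have heq : (2 * a s * V s +
      2 * ε * C * ∫ u in (0 : ℝ)..s, Real.exp (γ s u / ε) * (s - u) ^ β) / ε =
      C * (Real.exp (2 * A s / ε) * (2 * abar s / ε) *
        (2 * ∫ u in (0:ℝ)..s, w u) + Real.exp (2 * A s / ε) * (2 * w s)) := by
    rw [hVs, hJ, has, hws, ← hexpc]
    field_simp
  rw [heq]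
  exact hfinal
end
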